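/- Let (R, A) be network data such that the static planning problem has a unique optimal solution (ρ*, x*) with ρ* = 1 and the dual problem has a unique optimal solution (y*, z*), which is nonnegative. Define V = {Ra : a ∈ 𝒜} ⊂ ℝ^ℐ and the hyperplane V° = {v ∈ ℝ^ℐ : Σ_i y*_i v_i = 0}. Then there exists δ > 0 such that every v ∈ V° with Euclidean norm ‖v‖ ≤ δ belongs to V. -/

import Mathlib

open Finset

open InnerProductSpace
set_option linter.unusedSectionVars false
set_option linter.unnecessarySeqFocus false

open Finset

section Cone

variable {E : Type*} [NormedAddCommGroup E] [NormedSpace ℝ E]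

/-- The convex cone generated by finitely many vectors. -/
def coneOf {ι : Type*} [Fintype ι] (v : ι → E) : Set E :=
  {x | ∃ t : ι → ℝ, (∀ i, 0 ≤ t i) ∧ x = ∑ i, t i • v i}

lemma zero_mem_coneOf {ι : Type*} [Fintype ι] (v : ι → E) : (0 : E) ∈ coneOf v :=
  ⟨0, fun _ => le_refl 0, by simp⟩

lemma gen_mem_coneOf {ι : Type*} [Fintype ι] [DecidableEq ι] (v : ι → E) (i : ι) :
    v i ∈ coneOf v := by
  refine ⟨fun j => if j = i then 1 else 0, fun j => by positivity, ?_⟩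
  simp [ite_smul]

lemma smul_mem_coneOf {ι : Type*} [Fintype ι] (v : ι → E) {r : ℝ} (hr : 0 ≤ r) {x : E}
    (hx : x ∈ coneOf v) : r • x ∈ coneOf v := by
  obtain ⟨t, ht, rfl⟩ := hx
  exact ⟨fun i => r * t i, fun i => mul_nonneg hr (ht i),
    by rw [Finset.smul_sum]; simp [smul_smul]⟩

lemma add_mem_coneOf {ι : Type*} [Fintype ι] (v : ι → E) {x y : E}
    (hx : x ∈ coneOf v) (hy : y ∈ coneOf v) : x + y ∈ coneOf v := by
  obtain ⟨t, ht, rfl⟩ := hx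
  obtain ⟨s, hs, rfl⟩ := hy
  exact ⟨fun i => t i + s i, fun i => add_nonneg (ht i) (hs i),
    by rw [← Finset.sum_add_distrib]; simp [add_smul]⟩

lemma convex_coneOf {ι : Type*} [Fintype ι] (v : ι → E) : Convex ℝ (coneOf v) := by
  intro x hx y hy a b ha hb _
  exact add_mem_coneOf v (smul_mem_coneOf v ha hx) (smul_mem_coneOf v hb hy)

/-- Conic Carathéodory: any nonnegative combination can be re-expressed using a
linearly independent subfamily. -/
lemma caratheodory_cone {ι : Type*} [Fintype ι] [DecidableEq ι] (v : ι → E)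
    (s : Finset ι) (τ : ι → ℝ) (hτ : ∀ i, 0 ≤ τ i) :
    ∃ (s' : Finset ι) (τ' : ι → ℝ), LinearIndependent ℝ (fun i : s' => v i) ∧
      (∀ i, 0 ≤ τ' i) ∧ ∑ i ∈ s', τ' i • v i = ∑ i ∈ s, τ i • v i := by
  induction s using Finset.strongInduction generalizing τ with
  | _ s ih =>
    by_cases hli : LinearIndependent ℝ (fun i : s => v i)
    · exact ⟨s, τ, hli, hτ, rfl⟩
    · obtain ⟨g, hg0, i₁, hi₁⟩ := Fintype.not_linearIndependent_iff.mp hli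
      -- build a relation `c` on `ι` supported in `s` with a positive coordinate
      obtain ⟨c, hcrel, hcsupp, icpos, hicposmem, hicpos⟩ :
          ∃ c : ι → ℝ, (∑ i ∈ s, c i • v i = 0) ∧ (∀ i, i ∉ s → c i = 0) ∧
            ∃ i ∈ s, 0 < c i := by
        by_cases hpos : ∃ i : s, 0 < g i
        · obtain ⟨i₀, hi₀⟩ := hpos
          refine ⟨fun i => if h : i ∈ s then g ⟨i, h⟩ else 0, ?_, fun i hi => dif_neg hi,
            ⟨i₀, i₀.2, by simpa using hi₀⟩⟩
          rw [← Finset.sum_attach s (fun i => (if h : i ∈ s then g ⟨i, h⟩ else 0) • v i)]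
          simpa using hg0
        · push_neg at hpos
          have hneg : 0 < -g i₁ := by
            rcases lt_trichotomy (g i₁) 0 with h | h | h
            · linarith
            · exact absurd h hi₁
            · exact absurd h (not_lt.mpr (hpos i₁))
          refine ⟨fun i => if h : i ∈ s then -g ⟨i, h⟩ else 0, ?_, fun i hi => dif_neg hi,
            ⟨i₁, i₁.2, by simpa using hneg⟩⟩
          rw [← Finset.sum_attach s (fun i => (if h : i ∈ s then -g ⟨i, h⟩ else 0) • v i)]
          simpa using hg0
      set P : Finset ι := s.filter (fun i => 0 < c i) with hP
      have hPne : P.Nonempty := ⟨icpos, Finset.mem_filter.mpr ⟨hicposmem, hicpos⟩⟩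
      obtain ⟨i₀, hi₀P, hi₀min⟩ := Finset.exists_min_image P (fun i => τ i / c i) hPne
      have hi₀s : i₀ ∈ s := (Finset.mem_filter.mp hi₀P).1
      have hci₀ : 0 < c i₀ := (Finset.mem_filter.mp hi₀P).2
      set lam : ℝ := τ i₀ / c i₀ with hlam
      have hlam0 : 0 ≤ lam := div_nonneg (hτ i₀) hci₀.le
      set τ' : ι → ℝ := fun i => τ i - lam * c i with hτ'
      have hτ'0 : ∀ i, 0 ≤ τ' i := by
        intro i
        by_cases hiP : i ∈ P
        · have hci : 0 < c i := (Finset.mem_filter.mp hiP).2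
          have := hi₀min i hiP
          have : lam * c i ≤ τ i := by
            rw [hlam]
            calc τ i₀ / c i₀ * c i ≤ τ i / c i * c i := by
                  apply mul_le_mul_of_nonneg_right this hci.le
              _ = τ i := div_mul_cancel₀ _ hci.ne'
          simpa [τ'] using this
        · have hci : c i ≤ 0 := by
            by_cases his : i ∈ s
            · by_contra hc
              exact hiP (Finset.mem_filter.mpr ⟨his, lt_of_not_ge hc⟩)
            · rw [hcsupp i his]
          have : lam * c i ≤ 0 := mul_nonpos_of_nonneg_of_nonpos hlam0 hci
          have := hτ i
          simp only [τ']
          linarith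
      have hτ'i₀ : τ' i₀ = 0 := by
        simp only [τ', hlam]
        field_simp
        ring
      have hsum : ∑ i ∈ s.erase i₀, τ' i • v i = ∑ i ∈ s, τ i • v i := by
        rw [Finset.sum_erase _ (by rw [hτ'i₀, zero_smul])]
        have : ∑ i ∈ s, τ' i • v i = ∑ i ∈ s, τ i • v i - lam • ∑ i ∈ s, c i • v i := by
          rw [Finset.smul_sum, ← Finset.sum_sub_distrib]
          congr 1
          ext i
          simp [τ', sub_smul, smul_smul]
        rw [this, hcrel, smul_zero, sub_zero]
      obtain ⟨s', τ'', h1, h2, h3⟩ := ih (s.erase i₀) (Finset.erase_ssubset hi₀s) τ' hτ'0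
      exact ⟨s', τ'', h1, h2, by rw [h3, hsum]⟩

/-- A finitely generated cone in a finite-dimensional space is closed. -/
lemma isClosed_coneOf {ι : Type*} [Fintype ι] [DecidableEq ι] [FiniteDimensional ℝ E]
    (v : ι → E) : IsClosed (coneOf v) := by
  have key : coneOf v = ⋃ (s : Finset ι), ⋃ (_ : LinearIndependent ℝ (fun i : s => v i)),
      {x | ∃ t : ι → ℝ, (∀ i, 0 ≤ t i) ∧ x = ∑ i ∈ s, t i • v i} := by
    ext x
    constructor
    · rintro ⟨t, ht, rfl⟩
      obtain ⟨s', t', h1, h2, h3⟩ := caratheodory_cone v Finset.univ t ht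
      refine Set.mem_iUnion.mpr ⟨s', Set.mem_iUnion.mpr ⟨h1, ⟨t', h2, ?_⟩⟩⟩
      rw [h3]
    · rintro hx
      obtain ⟨s, hs⟩ := Set.mem_iUnion.mp hx
      obtain ⟨hsli, t, ht, rfl⟩ := Set.mem_iUnion.mp hs
      refine ⟨fun i => if i ∈ s then t i else 0, fun i => ?_, ?_⟩
      · by_cases h : i ∈ s
        · simpa [h] using ht i
        · simp [h]
      · rw [eq_comm]
        simp only [ite_smul, zero_smul]
        rw [Finset.sum_ite_mem, Finset.univ_inter]
  rw [key]
  refine isClosed_iUnion_of_finite fun s => isClosed_iUnion_of_finite fun hs => ?_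
  -- the simplicial cone on a linearly independent family is closed
  let φ : (s → ℝ) →ₗ[ℝ] E :=
    { toFun := fun t => ∑ i : s, t i • v i
      map_add' := fun a b => by simp [add_smul, Finset.sum_add_distrib]
      map_smul' := fun r a => by simp [smul_smul, Finset.smul_sum] }
  have hker : LinearMap.ker φ = ⊥ := by
    rw [LinearMap.ker_eq_bot']
    intro m hm
    have := Fintype.linearIndependent_iff.mp hs m hm
    funext i
    exact this i
  have hemb := LinearMap.isClosedEmbedding_of_injective hker
  have himg : {x | ∃ t : ι → ℝ, (∀ i, 0 ≤ t i) ∧ x = ∑ i ∈ s, t i • v i}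
      = φ '' {t : s → ℝ | ∀ i, 0 ≤ t i} := by
    ext x
    constructor
    · rintro ⟨t, ht, rfl⟩
      refine ⟨fun i => t i, fun i => ht i, ?_⟩
      show ∑ i : s, t i • v i = _
      rw [← Finset.sum_coe_sort s (fun i => t i • v i)]
    · rintro ⟨t, ht, rfl⟩
      refine ⟨fun i => if h : i ∈ s then t ⟨i, h⟩ else 0, fun i => ?_, ?_⟩
      · by_cases h : i ∈ s
        · simpa [h] using ht ⟨i, h⟩
        · simp [h]
      · show (∑ i : s, t i • v i : E) = _
        rw [← Finset.sum_attach s (fun i => (if h : i ∈ s then t ⟨i, h⟩ else 0) • v i)]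
        simp
  rw [himg]
  have horth : IsClosed {t : s → ℝ | ∀ i, 0 ≤ t i} := by
    have : {t : s → ℝ | ∀ i, 0 ≤ t i} = ⋂ i, {t : s → ℝ | 0 ≤ t i} := by
      ext; simp [Set.mem_iInter]
    rw [this]
    exact isClosed_iInter fun i => isClosed_le continuous_const (continuous_apply i)
  exact hemb.isClosedMap _ horth

end Cone

section Farkas

open InnerProductSpace

variable {E : Type*} [NormedAddCommGroup E] [InnerProductSpace ℝ E] [FiniteDimensional ℝ E]

/-- Farkas-type lemma: if every vector that has nonpositive inner product with all
generators also has nonpositive inner product with `b`, then `b` is in the cone. -/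
lemma mem_coneOf_of_dual {ι : Type*} [Fintype ι] [DecidableEq ι] (v : ι → E) (b : E)
    (h : ∀ f : E, (∀ i, ⟪f, v i⟫_ℝ ≤ 0) → ⟪f, b⟫_ℝ ≤ 0) : b ∈ coneOf v := by
  by_contra hb
  obtain ⟨f, u, hfC, hub⟩ := geometric_hahn_banach_closed_point
    (convex_coneOf v) (isClosed_coneOf v) hb
  have hu0 : 0 < u := by simpa using hfC 0 (zero_mem_coneOf v)
  have hfneg : ∀ x ∈ coneOf v, f x ≤ 0 := by
    intro x hx
    by_contra hfx
    push_neg at hfx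
    have hr : (0 : ℝ) ≤ (u + 1) / f x := div_nonneg (by linarith) hfx.le
    have hmem := smul_mem_coneOf v hr hx
    have := hfC _ hmem
    rw [map_smul, smul_eq_mul, div_mul_cancel₀ _ hfx.ne'] at this
    linarith
  set c : E := (toDual ℝ E).symm f with hc
  have hcf : ∀ x : E, ⟪c, x⟫_ℝ = f x := fun x => toDual_symm_apply
  have := h c (fun i => by rw [hcf]; exact hfneg _ (gen_mem_coneOf v i))
  rw [hcf] at this
  linarith [hub]

end Farkas
section Tech
open Finset InnerProductSpace


section
variable {J : Type*} [Fintype J] [DecidableEq J]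

noncomputable def toF (J : Type*) [Fintype J] (u : J → ℝ) (β : ℝ) : EuclideanSpace ℝ (J ⊕ Unit) :=
  (WithLp.equiv 2 _).symm (Sum.elim u fun _ => β)

lemma toF_inl (u : J → ℝ) (β : ℝ) (j : J) : toF J u β (Sum.inl j) = u j := rfl
lemma toF_inr (u : J → ℝ) (β : ℝ) : toF J u β (Sum.inr ()) = β := rfl

lemma einner {n : Type*} [Fintype n] (x y : EuclideanSpace ℝ n) :
    ⟪x, y⟫_ℝ = ∑ i, x i * y i := by
  simp [PiLp.inner_apply, RCLike.inner_apply, conj_trivial]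
  exact Finset.sum_congr rfl fun i _ => mul_comm _ _

lemma inner_toF (f : EuclideanSpace ℝ (J ⊕ Unit)) (u : J → ℝ) (β : ℝ) :
    ⟪f, toF J u β⟫_ℝ = (∑ j, f (Sum.inl j) * u j) + f (Sum.inr ()) * β := by
  rw [einner, Fintype.sum_sum_type]
  simp [toF_inl, toF_inr]

lemma sum_smul_apply {ι n : Type*} [Fintype n] (s : Finset ι) (t : ι → ℝ)
    (g : ι → EuclideanSpace ℝ n) (q : n) :
    (∑ i ∈ s, t i • g i) q = ∑ i ∈ s, t i * g i q := by
  classical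
  induction s using Finset.induction with
  | empty => rfl
  | insert _ _ h ih => rw [Finset.sum_insert h, Finset.sum_insert h, ← ih]; rfl

end

end Tech

section Network

variable {I J K : Type*} [Fintype I] [Fintype J] [Fintype K] [DecidableEq J] [DecidableEq K]

/-- Assumptions on the capacity consumption matrix `A`: entries in `{0,1}`;
input processors only work on input activities and service processors only on
service activities; every activity uses some processor.  Here `JI` is the set
of input activities (service activities are its complement) and `KI` the set
of input processors (service processors are its complement). -/
def NetData (A : K → J → ℝ) (JI : Finset J) (KI : Finset K) : Prop :=
  (∀ k j, A k j = 0 ∨ A k j = 1) ∧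
  (∀ k j, ((k ∈ KI ∧ j ∉ JI) ∨ (k ∉ KI ∧ j ∈ JI)) → A k j = 0) ∧
  (∀ j, ∃ k, A k j = 1)

/-- The allocation set `𝒜`. -/
def Alloc (A : K → J → ℝ) (KI : Finset K) : Set (J → ℝ) :=
  {a | (∀ j, 0 ≤ a j) ∧ (∀ k, ∑ j, A k j * a j ≤ 1) ∧ ∀ k ∈ KI, ∑ j, A k j * a j = 1}

/-- Feasibility for the static planning problem. -/
def SPPfeas (R : I → J → ℝ) (A : K → J → ℝ) (KI : Finset K) (ρ : ℝ) (x : J → ℝ) : Prop :=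
  (∀ i, ∑ j, R i j * x j = 0) ∧ (∀ k ∈ KI, ∑ j, A k j * x j = 1) ∧
  (∀ k, k ∉ KI → ∑ j, A k j * x j ≤ ρ) ∧ (∀ j, 0 ≤ x j)

/-- Optimality for the static planning problem (minimize `ρ`). -/
def SPPopt (R : I → J → ℝ) (A : K → J → ℝ) (KI : Finset K) (ρ : ℝ) (x : J → ℝ) : Prop :=
  SPPfeas R A KI ρ x ∧ ∀ ρ' x', SPPfeas R A KI ρ' x' → ρ ≤ ρ'

/-- Unique optimality for the static planning problem. -/
def SPPuniqueOpt (R : I → J → ℝ) (A : K → J → ℝ) (KI : Finset K) (ρ : ℝ) (x : J → ℝ) : Prop :=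
  SPPopt R A KI ρ x ∧ ∀ ρ' x', SPPopt R A KI ρ' x' → ρ' = ρ ∧ x' = x

/-- Feasibility for the dual of the static planning problem. -/
def Dfeas (R : I → J → ℝ) (A : K → J → ℝ) (JI : Finset J) (KI : Finset K)
    (y : I → ℝ) (z : K → ℝ) : Prop :=
  (∀ j ∈ JI, ∑ i, y i * R i j ≤ - ∑ k ∈ KI, z k * A k j) ∧
  (∀ j, j ∉ JI → ∑ i, y i * R i j ≤ ∑ k ∈ KIᶜ, z k * A k j) ∧
  (∑ k ∈ KIᶜ, z k = 1) ∧ (∀ k, k ∉ KI → 0 ≤ z k)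

/-- Optimality for the dual problem (maximize `∑_{k ∈ KI} z k`). -/
def Dopt (R : I → J → ℝ) (A : K → J → ℝ) (JI : Finset J) (KI : Finset K)
    (y : I → ℝ) (z : K → ℝ) : Prop :=
  Dfeas R A JI KI y z ∧
    ∀ y' z', Dfeas R A JI KI y' z' → ∑ k ∈ KI, z' k ≤ ∑ k ∈ KI, z k

/-- Unique optimality for the dual problem. -/
def DuniqueOpt (R : I → J → ℝ) (A : K → J → ℝ) (JI : Finset J) (KI : Finset K)
    (y : I → ℝ) (z : K → ℝ) : Prop :=
  Dopt R A JI KI y z ∧ ∀ y' z', Dopt R A JI KI y' z' → y' = y ∧ z' = z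

end Network

section Main

open Finset

variable {I J K : Type*} [Fintype I] [Fintype J] [Fintype K] [DecidableEq J] [DecidableEq K]

lemma sum_swap_mul (d : I → ℝ) (M : I → J → ℝ) (a : J → ℝ) :
    ∑ i, d i * ∑ j, M i j * a j = ∑ j, (∑ i, d i * M i j) * a j := by
  simp_rw [Finset.mul_sum, Finset.sum_mul, mul_assoc]
  exact Finset.sum_comm

lemma A_nonneg {A : K → J → ℝ} {JI : Finset J} {KI : Finset K} (hND : NetData A JI KI)
    (k : K) (j : J) : 0 ≤ A k j := by
  rcases hND.1 k j with h | h <;> rw [h] <;> norm_num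

lemma weak_duality (R : I → J → ℝ) (A : K → J → ℝ) (JI : Finset J) (KI : Finset K)
    (hND : NetData A JI KI) (x : J → ℝ) (hx : SPPfeas R A KI 1 x)
    (y : I → ℝ) (z : K → ℝ) (hyz : Dfeas R A JI KI y z) : ∑ k ∈ KI, z k ≤ 1 := by
  obtain ⟨hRx, hKIx, hKSx, hx0⟩ := hx
  obtain ⟨hdJI, hdJS, hnorm, hz0⟩ := hyz
  have h0 : ∑ j, (∑ i, y i * R i j) * x j = 0 := by
    rw [← sum_swap_mul]
    simp [hRx]
  have hsplit : ∑ j ∈ JI, (∑ i, y i * R i j) * x j + ∑ j ∈ JIᶜ, (∑ i, y i * R i j) * x j = 0 := by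
    rw [Finset.sum_add_sum_compl]; exact h0
  have hb1 : ∑ j ∈ JI, (∑ i, y i * R i j) * x j ≤
      ∑ j ∈ JI, (- ∑ k ∈ KI, z k * A k j) * x j :=
    Finset.sum_le_sum fun j hj => mul_le_mul_of_nonneg_right (hdJI j hj) (hx0 j)
  have hswap1 : ∑ j ∈ JI, (- ∑ k ∈ KI, z k * A k j) * x j
      = - ∑ k ∈ KI, z k * ∑ j ∈ JI, A k j * x j := by
    simp_rw [neg_mul, Finset.sum_neg_distrib, Finset.sum_mul, Finset.mul_sum, mul_assoc]
    rw [Finset.sum_comm]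
  have hfull1 : ∀ k ∈ KI, ∑ j ∈ JI, A k j * x j = 1 := by
    intro k hk
    rw [Finset.sum_subset (Finset.subset_univ JI)
      (fun j _ hj => by rw [hND.2.1 k j (Or.inl ⟨hk, hj⟩), zero_mul])]
    exact hKIx k hk
  have hb2 : ∑ j ∈ JIᶜ, (∑ i, y i * R i j) * x j ≤
      ∑ j ∈ JIᶜ, (∑ k ∈ KIᶜ, z k * A k j) * x j :=
    Finset.sum_le_sum fun j hj =>
      mul_le_mul_of_nonneg_right (hdJS j (Finset.mem_compl.mp hj)) (hx0 j)
  have hswap2 : ∑ j ∈ JIᶜ, (∑ k ∈ KIᶜ, z k * A k j) * x j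
      = ∑ k ∈ KIᶜ, z k * ∑ j ∈ JIᶜ, A k j * x j := by
    simp_rw [Finset.sum_mul, Finset.mul_sum, mul_assoc]
    rw [Finset.sum_comm]
  have hfull2 : ∀ k ∈ KIᶜ, ∑ j ∈ JIᶜ, A k j * x j = ∑ j, A k j * x j := by
    intro k hk
    exact Finset.sum_subset (Finset.subset_univ JIᶜ)
      (fun j _ hj => by
        rw [hND.2.1 k j (Or.inr ⟨Finset.mem_compl.mp hk, by simpa using hj⟩), zero_mul])
  have hb3 : ∑ k ∈ KIᶜ, z k * ∑ j ∈ JIᶜ, A k j * x j ≤ 1 := by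
    calc ∑ k ∈ KIᶜ, z k * ∑ j ∈ JIᶜ, A k j * x j
        ≤ ∑ k ∈ KIᶜ, z k * 1 := Finset.sum_le_sum fun k hk => by
          rw [hfull2 k hk]
          exact mul_le_mul_of_nonneg_left (hKSx k (Finset.mem_compl.mp hk))
            (hz0 k (Finset.mem_compl.mp hk))
      _ = 1 := by simpa using hnorm
  have hone : ∀ k ∈ KI, z k * ∑ j ∈ JI, A k j * x j = z k := by
    intro k hk; rw [hfull1 k hk, mul_one]
  have : 0 ≤ - ∑ k ∈ KI, z k + 1 := by
    have e1 := hb1.trans_eq hswap1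
    have e2 := hb2.trans (hswap2.le.trans hb3)
    have : ∑ k ∈ KI, z k * ∑ j ∈ JI, A k j * x j = ∑ k ∈ KI, z k :=
      Finset.sum_congr rfl hone
    rw [this] at e1
    linarith
  linarith

end Main

section StepC

open Finset InnerProductSpace

variable {I J K : Type*} [Fintype I] [Fintype J] [Fintype K] [DecidableEq J] [DecidableEq K]

lemma step_c (R : I → J → ℝ) (A : K → J → ℝ) (JI : Finset J) (KI : Finset K)
    (hND : NetData A JI KI) (xstar : J → ℝ) (hxf : SPPfeas R A KI 1 xstar)
    (y : I → ℝ) (z : K → ℝ) (hD : DuniqueOpt R A JI KI y z) (hznn : ∀ k, 0 ≤ z k)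
    (c : I → ℝ) (hcy : ∑ i, y i * c i = 0) (hc0 : c ≠ 0)
    (hcon : ∀ a ∈ Alloc A KI, (∑ i, y i * ∑ j, R i j * a j) = 0 →
      ∑ i, c i * ∑ j, R i j * a j ≤ 0) : False := by
  classical
  -- generators of the Farkas cone
  set vgen : (Bool ⊕ (K × Bool ⊕ (J ⊕ Unit))) → EuclideanSpace ℝ (J ⊕ Unit) :=
    Sum.elim
      (fun b => toF J (fun j => (if b then (1:ℝ) else -1) * ∑ i, y i * R i j) 0)
      (Sum.elim
        (fun kb : K × Bool =>
          if kb.2 then toF J (fun j => A kb.1 j) 1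
          else if kb.1 ∈ KI then toF J (fun j => -A kb.1 j) (-1) else toF J 0 0)
        (Sum.elim
          (fun j' => toF J (fun j => if j = j' then (-1:ℝ) else 0) 0)
          (fun _ => toF J 0 1))) with hvgen
  have hmem : toF J (fun j => ∑ i, c i * R i j) 0 ∈ coneOf vgen := by
    apply mem_coneOf_of_dual
    intro f hf
    set u : J → ℝ := fun j => f (Sum.inl j) with hu
    set β : ℝ := f (Sum.inr ()) with hβdef
    have hyR : ∑ j, u j * ∑ i, y i * R i j = 0 := by
      have h1 := hf (Sum.inl true)
      have h2 := hf (Sum.inl false)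
      rw [show vgen (Sum.inl true) = toF J (fun j => (1:ℝ) * ∑ i, y i * R i j) 0 by
        simp [hvgen]] at h1
      rw [show vgen (Sum.inl false) = toF J (fun j => (-1:ℝ) * ∑ i, y i * R i j) 0 by
        simp [hvgen]] at h2
      rw [inner_toF] at h1 h2
      simp only [one_mul, neg_one_mul, mul_neg, mul_zero, add_zero] at h1 h2
      rw [Finset.sum_neg_distrib] at h2
      exact le_antisymm h1 (by linarith)
    have hk1 : ∀ k, ∑ j, u j * A k j + β ≤ 0 := by
      intro k
      have h := hf (Sum.inr (Sum.inl (k, true)))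
      rw [show vgen (Sum.inr (Sum.inl (k, true))) = toF J (fun j => A k j) 1 by
        simp [hvgen]] at h
      rw [inner_toF] at h
      simpa using h
    have hkKI : ∀ k ∈ KI, 0 ≤ ∑ j, u j * A k j + β := by
      intro k hk
      have h := hf (Sum.inr (Sum.inl (k, false)))
      rw [show vgen (Sum.inr (Sum.inl (k, false))) = toF J (fun j => -A k j) (-1) by
        simp [hvgen, hk]] at h
      rw [inner_toF] at h
      simp only [mul_neg, Finset.sum_neg_distrib, mul_one] at h
      linarith
    have hunn : ∀ j, 0 ≤ u j := by
      intro j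
      have h := hf (Sum.inr (Sum.inr (Sum.inl j)))
      rw [show vgen (Sum.inr (Sum.inr (Sum.inl j)))
        = toF J (fun j' => if j' = j then (-1:ℝ) else 0) 0 by simp [hvgen]] at h
      rw [inner_toF] at h
      simp only [mul_ite, mul_neg, mul_one, mul_zero, add_zero] at h
      rw [Finset.sum_ite_eq' Finset.univ j (fun j' => -u j')] at h
      simpa using h
    have hβ : β ≤ 0 := by
      have h := hf (Sum.inr (Sum.inr (Sum.inr ())))
      rw [show vgen (Sum.inr (Sum.inr (Sum.inr ()))) = toF J 0 1 by simp [hvgen]] at h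
      rw [inner_toF] at h
      simpa using h
    rw [inner_toF]
    simp only [mul_zero, add_zero]
    rcases eq_or_lt_of_le hβ with hβ0 | hβneg
    · have hu0 : ∀ j, u j = 0 := by
        intro j
        obtain ⟨k, hk⟩ := hND.2.2 j
        have h1 : u j ≤ ∑ j', u j' * A k j' := by
          calc u j = u j * A k j := by rw [hk, mul_one]
            _ ≤ ∑ j', u j' * A k j' :=
              Finset.single_le_sum
                (fun j' _ => mul_nonneg (hunn j') (A_nonneg hND k j')) (Finset.mem_univ j)
        have h2 := hk1 k
        rw [← hβ0] at h2
        exact le_antisymm (by linarith) (hunn j)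
      have hf0 : ∀ x : J, f (Sum.inl x) = 0 := hu0
      simp [hf0]
    · set a : J → ℝ := fun j => u j / (-β) with ha
      have hnegβ : 0 < -β := by linarith
      have haA : a ∈ Alloc A KI := by
        refine ⟨fun j => div_nonneg (hunn j) hnegβ.le, fun k => ?_, fun k hk => ?_⟩
        · rw [show ∑ j, A k j * a j = (∑ j, u j * A k j) / (-β) by
            rw [Finset.sum_div]; exact Finset.sum_congr rfl fun j _ => by
              rw [ha]; ring]
          rw [div_le_one hnegβ]
          linarith [hk1 k]
        · rw [show ∑ j, A k j * a j = (∑ j, u j * A k j) / (-β) by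
            rw [Finset.sum_div]; exact Finset.sum_congr rfl fun j _ => by
              rw [ha]; ring]
          rw [div_eq_one_iff_eq hnegβ.ne']
          linarith [hk1 k, hkKI k hk]
      have hay : ∑ i, y i * ∑ j, R i j * a j = 0 := by
        rw [sum_swap_mul]
        rw [show ∑ j, (∑ i, y i * R i j) * a j = (∑ j, u j * ∑ i, y i * R i j) / (-β) by
          rw [Finset.sum_div]; exact Finset.sum_congr rfl fun j _ => by
            rw [ha]; ring]
        rw [hyR, zero_div]
      have hac := hcon a haA hay
      rw [sum_swap_mul] at hac
      have heq : ∑ j, (∑ i, c i * R i j) * a j = (∑ j, u j * ∑ i, c i * R i j) / (-β) := by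
        rw [Finset.sum_div]; exact Finset.sum_congr rfl fun j _ => by
          rw [ha]; ring
      rw [heq, div_nonpos_iff] at hac
      rcases hac with ⟨h1, h2⟩ | ⟨h1, h2⟩
      · linarith
      · exact h1
  -- extract the multipliers
  obtain ⟨t, ht, hbeq⟩ := hmem
  set lam : ℝ := t (Sum.inl true) - t (Sum.inl false) with hlam
  set w : K → ℝ := fun k => t (Sum.inr (Sum.inl (k, true)))
    - (if k ∈ KI then t (Sum.inr (Sum.inl (k, false))) else 0) with hw
  have happly : ∀ q, toF J (fun j => ∑ i, c i * R i j) 0 q = ∑ i, t i * vgen i q := by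
    intro q
    rw [show toF J (fun j => ∑ i, c i * R i j) 0 q = (∑ i, t i • vgen i) q from
      congrFun (congrArg WithLp.ofLp hbeq) q]
    exact sum_smul_apply _ _ _ _
  have hcoord1 : ∀ j, (∑ i, c i * R i j) = lam * (∑ i, y i * R i j) + ∑ k, w k * A k j
      - t (Sum.inr (Sum.inr (Sum.inl j))) := by
    intro j
    have h := happly (Sum.inl j)
    rw [toF_inl] at h
    rw [Fintype.sum_sum_type, Fintype.sum_bool, Fintype.sum_sum_type,
      Fintype.sum_prod_type, Fintype.sum_sum_type] at h
    have hb1t : vgen (Sum.inl true) (Sum.inl j)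
        = (1:ℝ) * ∑ i, y i * R i j := by simp [hvgen, toF_inl]
    have hb1f : vgen (Sum.inl false) (Sum.inl j)
        = (-1:ℝ) * ∑ i, y i * R i j := by simp [hvgen, toF_inl]
    have hb4 : ∀ j', vgen (Sum.inr (Sum.inr (Sum.inl j'))) (Sum.inl j)
        = if j = j' then (-1:ℝ) else 0 := by
      intro j'; simp [hvgen, toF_inl]
    have hb5 : ∀ x : Unit, vgen (Sum.inr (Sum.inr (Sum.inr x))) (Sum.inl j) = 0 := by
      intro x; simp [hvgen, toF_inl]
    have hKsum : ∑ k, w k * A k j = ∑ x : K, ∑ x_1 : Bool,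
        t (Sum.inr (Sum.inl (x, x_1))) * vgen (Sum.inr (Sum.inl (x, x_1))) (Sum.inl j) := by
      refine Finset.sum_congr rfl fun k _ => ?_
      rw [Fintype.sum_bool]
      rw [show vgen (Sum.inr (Sum.inl (k, true))) (Sum.inl j) = A k j by
        simp [hvgen, toF_inl]]
      rw [show vgen (Sum.inr (Sum.inl (k, false))) (Sum.inl j)
          = if k ∈ KI then -A k j else 0 by
        by_cases hk : k ∈ KI <;> simp [hvgen, hk, toF_inl]]
      by_cases hk : k ∈ KI
      · simp only [hw, if_pos hk]; ring
      · simp only [hw, if_neg hk]; ring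
    have hJsum : (∑ x : J, t (Sum.inr (Sum.inr (Sum.inl x)))
        * vgen (Sum.inr (Sum.inr (Sum.inl x))) (Sum.inl j))
        = - t (Sum.inr (Sum.inr (Sum.inl j))) := by
      simp only [hb4, mul_ite, mul_neg, mul_one, mul_zero]
      rw [Finset.sum_ite_eq Finset.univ j (fun j' => -t (Sum.inr (Sum.inr (Sum.inl j'))))]
      simp
    rw [hb1t, hb1f, hJsum, ← hKsum] at h
    simp only [hb5, mul_zero, Finset.sum_const_zero, add_zero] at h
    rw [h, hlam]
    ring
  have hcoord2 : (0:ℝ) = ∑ k, w k + t (Sum.inr (Sum.inr (Sum.inr ()))) := by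
    have h := happly (Sum.inr ())
    rw [toF_inr] at h
    rw [Fintype.sum_sum_type, Fintype.sum_bool, Fintype.sum_sum_type,
      Fintype.sum_prod_type, Fintype.sum_sum_type] at h
    have hc1t : vgen (Sum.inl true) (Sum.inr ()) = 0 := by simp [hvgen, toF_inr]
    have hc1f : vgen (Sum.inl false) (Sum.inr ()) = 0 := by simp [hvgen, toF_inr]
    have hc4 : ∀ j', vgen (Sum.inr (Sum.inr (Sum.inl j'))) (Sum.inr ()) = 0 := by
      intro j'; simp [hvgen, toF_inr]
    have hc5 : ∀ x : Unit, vgen (Sum.inr (Sum.inr (Sum.inr x))) (Sum.inr ()) = 1 := by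
      intro x; simp [hvgen, toF_inr]
    have hKsum2 : ∑ k, w k = ∑ x : K, ∑ x_1 : Bool,
        t (Sum.inr (Sum.inl (x, x_1))) * vgen (Sum.inr (Sum.inl (x, x_1))) (Sum.inr ()) := by
      refine Finset.sum_congr rfl fun k _ => ?_
      rw [Fintype.sum_bool]
      rw [show vgen (Sum.inr (Sum.inl (k, true))) (Sum.inr ()) = 1 by
        simp [hvgen, toF_inr]]
      rw [show vgen (Sum.inr (Sum.inl (k, false))) (Sum.inr ())
          = if k ∈ KI then -1 else 0 by
        by_cases hk : k ∈ KI <;> simp [hvgen, hk, toF_inr]]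
      by_cases hk : k ∈ KI
      · simp only [hw, if_pos hk]; ring
      · simp only [hw, if_neg hk]; ring
    rw [hc1t, hc1f, ← hKsum2] at h
    simp only [hc4, hc5, mul_zero, mul_one, Finset.sum_const_zero, add_zero, zero_add,
      mul_zero] at h
    rw [h]
    simp
  have hF1 : ∀ j, (∑ i, c i * R i j)
      ≤ lam * (∑ i, y i * R i j) + ∑ k, w k * A k j := by
    intro j
    have := hcoord1 j
    have hts := ht (Sum.inr (Sum.inr (Sum.inl j)))
    linarith
  have hsumw : ∑ k, w k ≤ 0 := by
    have := hcoord2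
    have htt := ht (Sum.inr (Sum.inr (Sum.inr ())))
    linarith
  have hwnn : ∀ k, k ∉ KI → 0 ≤ w k := by
    intro k hk
    simp only [hw, if_neg hk, sub_zero]
    exact ht _
  set t0 : ℝ := ∑ k ∈ KIᶜ, w k with ht0def
  have ht0 : 0 ≤ t0 :=
    Finset.sum_nonneg fun k hk => hwnn k (Finset.mem_compl.mp hk)
  have hKIw : ∑ k ∈ KI, w k ≤ -t0 := by
    have := Finset.sum_add_sum_compl KI w
    rw [ht0def]
    linarith
  obtain ⟨⟨hdJI, hdJS, hnorm, hdz⟩, hDmax⟩ := hD.1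
  have hdstar : ∑ k ∈ KI, z k ≤ 1 :=
    weak_duality R A JI KI hND xstar hxf y z hD.1.1
  set N : ℝ := 1 + t0 with hNdef
  have hN : 0 < N := by rw [hNdef]; linarith
  set chat : I → ℝ := fun i => c i - lam * y i with hchat
  set y' : I → ℝ := fun i => (y i + chat i) / N with hy'
  set z' : K → ℝ := fun k => (z k + (if k ∈ KI then -w k else w k)) / N with hz'
  have hchatR : ∀ j, ∑ i, chat i * R i j
      = (∑ i, c i * R i j) - lam * ∑ i, y i * R i j := by
    intro j
    rw [Finset.mul_sum, ← Finset.sum_sub_distrib]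
    exact Finset.sum_congr rfl fun i _ => by simp only [hchat]; ring
  have hfeas : Dfeas R A JI KI y' z' := by
    refine ⟨?_, ?_, ?_, ?_⟩
    · intro j hj
      have hL : ∑ i, y' i * R i j
          = ((∑ i, y i * R i j) + (∑ i, chat i * R i j)) / N := by
        rw [eq_div_iff hN.ne', Finset.sum_mul, ← Finset.sum_add_distrib]
        refine Finset.sum_congr rfl fun i _ => ?_
        simp only [hy']
        field_simp
      have hRKI : ∑ k ∈ KI, z' k * A k j
          = ((∑ k ∈ KI, z k * A k j) - (∑ k ∈ KI, w k * A k j)) / N := by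
        rw [eq_div_iff hN.ne', ← Finset.sum_sub_distrib, Finset.sum_mul]
        refine Finset.sum_congr rfl fun k hk => ?_
        simp only [hz', if_pos hk]
        field_simp
        ring
      have hvanish : ∑ k, w k * A k j = ∑ k ∈ KI, w k * A k j :=
        (Finset.sum_subset (Finset.subset_univ KI) (fun k _ hk => by
          rw [hND.2.1 k j (Or.inr ⟨hk, hj⟩), mul_zero])).symm
      rw [hL, hRKI, ← neg_div]
      gcongr
      have h1 := hdJI j hj
      have h2 := hF1 j
      have h3 := hchatR j
      linarith
    · intro j hj
      have hL : ∑ i, y' i * R i j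
          = ((∑ i, y i * R i j) + (∑ i, chat i * R i j)) / N := by
        rw [eq_div_iff hN.ne', Finset.sum_mul, ← Finset.sum_add_distrib]
        refine Finset.sum_congr rfl fun i _ => ?_
        simp only [hy']
        field_simp
      have hRKS : ∑ k ∈ KIᶜ, z' k * A k j
          = ((∑ k ∈ KIᶜ, z k * A k j) + (∑ k ∈ KIᶜ, w k * A k j)) / N := by
        rw [eq_div_iff hN.ne', ← Finset.sum_add_distrib, Finset.sum_mul]
        refine Finset.sum_congr rfl fun k hk => ?_
        simp only [hz', if_neg (Finset.mem_compl.mp hk)]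
        field_simp
      have hvanish : ∑ k, w k * A k j = ∑ k ∈ KIᶜ, w k * A k j :=
        (Finset.sum_subset (Finset.subset_univ KIᶜ) (fun k _ hk => by
          rw [hND.2.1 k j (Or.inl ⟨by simpa using hk, hj⟩), mul_zero])).symm
      rw [hL, hRKS]
      gcongr <;> linarith [hdJS j hj, hF1 j, hchatR j, hvanish]
    · have : ∑ k ∈ KIᶜ, z' k = ((∑ k ∈ KIᶜ, z k) + t0) / N := by
        rw [eq_div_iff hN.ne', ht0def, ← Finset.sum_add_distrib, Finset.sum_mul]
        refine Finset.sum_congr rfl fun k hk => ?_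
        simp only [hz', if_neg (Finset.mem_compl.mp hk)]
        field_simp
      rw [this, hnorm, ← hNdef]
      exact div_self hN.ne'
    · intro k hk
      simp only [hz', if_neg hk]
      exact div_nonneg (add_nonneg (hznn k) (hwnn k hk)) hN.le
  have hobj : ∑ k ∈ KI, z k ≤ ∑ k ∈ KI, z' k := by
    have hform : ∑ k ∈ KI, z' k = ((∑ k ∈ KI, z k) - ∑ k ∈ KI, w k) / N := by
      rw [eq_div_iff hN.ne', ← Finset.sum_sub_distrib, Finset.sum_mul]
      refine Finset.sum_congr rfl fun k hk => ?_
      simp only [hz', if_pos hk]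
      field_simp
      ring
    rw [hform, le_div_iff₀ hN]
    nlinarith [hdstar, ht0, hKIw]
  have hDopt' : Dopt R A JI KI y' z' :=
    ⟨hfeas, fun y'' z'' h'' => le_trans (hDmax y'' z'' h'') hobj⟩
  obtain ⟨hy'eq, _⟩ := hD.2 y' z' hDopt'
  have hkey : ∀ i, c i = (t0 + lam) * y i := by
    intro i
    have h := congrFun hy'eq i
    simp only [hy', hchat] at h
    rw [div_eq_iff hN.ne'] at h
    rw [hNdef] at h
    linear_combination h
  have hfin : (t0 + lam) * ∑ i, y i * y i = 0 := by
    have h1 : ∑ i, y i * c i = (t0 + lam) * ∑ i, y i * y i := by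
      rw [Finset.mul_sum]
      exact Finset.sum_congr rfl fun i _ => by rw [hkey i]; ring
    rw [← h1, hcy]
  rcases mul_eq_zero.mp hfin with h | h
  · exact hc0 (funext fun i => by rw [hkey i, h, zero_mul]; rfl)
  · have hy0 : ∀ i, y i = 0 := by
      intro i
      have hz := (Finset.sum_eq_zero_iff_of_nonneg
        (fun i _ => mul_self_nonneg (y i))).mp h i (Finset.mem_univ i)
      exact mul_self_eq_zero.mp hz
    exact hc0 (funext fun i => by rw [hkey i, hy0 i, mul_zero]; rfl)

end StepC

/-- The lifting vector `ζ^α` determined by `α` and the dual optimum `y`. -/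
noncomputable def zeta {I : Type*} [Fintype I] (α y : I → ℝ) : I → ℝ :=
  fun i => (y i / α i) / ∑ i', (y i') ^ 2 / α i'

/-- A fluid model solution under the maximum pressure policy with parameter `α`. -/
def FluidSol {I J K : Type*} [Fintype I] [Fintype J] [Fintype K] [DecidableEq J] [DecidableEq K]
    (R : I → J → ℝ) (A : K → J → ℝ) (KI : Finset K) (α : I → ℝ)
    (Z : ℝ → I → ℝ) (T : ℝ → J → ℝ) : Prop :=
  (∀ t, 0 ≤ t → ∀ i, Z t i = Z 0 i - ∑ j, R i j * T t j) ∧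
  (∀ t, 0 ≤ t → ∀ i, 0 ≤ Z t i) ∧
  (∀ s t, 0 ≤ s → s ≤ t → ∀ k ∈ KI, ∑ j, A k j * (T t j - T s j) = t - s) ∧
  (∀ s t, 0 ≤ s → s ≤ t → ∀ k, ∑ j, A k j * (T t j - T s j) ≤ t - s) ∧
  (∀ s t, 0 ≤ s → s ≤ t → ∀ j, T s j ≤ T t j) ∧
  (∀ j, T 0 j = 0) ∧
  (∀ t, 0 < t → ∀ (Z' : I → ℝ) (T' : J → ℝ),
    (∀ i, HasDerivAt (fun s => Z s i) (Z' i) t) →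
    (∀ j, HasDerivAt (fun s => T s j) (T' j) t) →
    ∑ i, α i * Z t i * ∑ j, R i j * T' j =
      sSup ((fun a => ∑ i, α i * Z t i * ∑ j, R i j * a j) '' Alloc A KI))

/-- Lemma 5: under complete resource pooling, the set `V = {Ra : a ∈ 𝒜}`
contains a `δ`-neighborhood of the origin inside the hyperplane `y* · v = 0`. -/
theorem rate_set_contains_neighborhood {I J K : Type*} [Fintype I] [Fintype J] [Fintype K] [DecidableEq J] [DecidableEq K]
    (R : I → J → ℝ) (A : K → J → ℝ) (JI : Finset J) (KI : Finset K)
    (hND : NetData A JI KI)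
    (xstar : J → ℝ) (hSPP : SPPuniqueOpt R A KI 1 xstar)
    (ystar : I → ℝ) (zstar : K → ℝ) (hD : DuniqueOpt R A JI KI ystar zstar)
    (hynn : ∀ i, 0 ≤ ystar i) (hznn : ∀ k, 0 ≤ zstar k) :
    ∃ δ : ℝ, 0 < δ ∧
      ∀ v : I → ℝ, (∑ i, ystar i * v i = 0) → Real.sqrt (∑ i, v i ^ 2) ≤ δ →
        v ∈ (fun a => fun i => ∑ j, R i j * a j) '' Alloc A KI := by
  classical
  obtain ⟨⟨hxf, hmin⟩, huniq⟩ := hSPP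
  obtain ⟨hRx, hKIx, hKSx, hxnn⟩ := hxf
  have hxf' : SPPfeas R A KI 1 xstar := ⟨hRx, hKIx, hKSx, hxnn⟩
  -- the linear map a ↦ Ra into Euclidean space
  set ℒ₀ : (J → ℝ) →ₗ[ℝ] (I → ℝ) :=
    { toFun := fun a i => ∑ j, R i j * a j
      map_add' := by
        intro a b; funext i
        simp [mul_add, Finset.sum_add_distrib]
      map_smul' := by
        intro r a; funext i
        simp only [Pi.smul_apply, smul_eq_mul, RingHom.id_apply, Finset.mul_sum]
        exact Finset.sum_congr rfl fun j _ => by ring } with hℒ₀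
  set ℒ : (J → ℝ) →ₗ[ℝ] EuclideanSpace ℝ I :=
    (WithLp.linearEquiv 2 ℝ (I → ℝ)).symm.toLinearMap ∘ₗ ℒ₀ with hℒdef
  have hℒapp : ∀ a i, ℒ a i = ∑ j, R i j * a j := fun a i => rfl
  have hcontℒ : Continuous ℒ := ℒ.continuous_of_finiteDimensional
  set yE : EuclideanSpace ℝ I := (WithLp.equiv 2 _).symm ystar with hyE
  have hyEapp : ∀ i, yE i = ystar i := fun i => rfl
  set V : Set (EuclideanSpace ℝ I) := ℒ '' Alloc A KI with hV
  set D : Set (EuclideanSpace ℝ I) := V ∩ {v | ⟪yE, v⟫_ℝ = 0} with hDset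
  -- basic facts about Alloc
  have hAconvex : Convex ℝ (Alloc A KI) := by
    intro a ha b hb p q hp hq hpq
    refine ⟨fun j => add_nonneg (mul_nonneg hp (ha.1 j)) (mul_nonneg hq (hb.1 j)),
      fun k => ?_, fun k hk => ?_⟩
    · have he : ∑ j, A k j * (p • a + q • b) j
          = p * (∑ j, A k j * a j) + q * (∑ j, A k j * b j) := by
        rw [Finset.mul_sum, Finset.mul_sum, ← Finset.sum_add_distrib]
        exact Finset.sum_congr rfl fun j _ => by
          simp only [Pi.add_apply, Pi.smul_apply, smul_eq_mul]; ring
      rw [he]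
      nlinarith [mul_le_mul_of_nonneg_left (ha.2.1 k) hp,
        mul_le_mul_of_nonneg_left (hb.2.1 k) hq]
    · have he : ∑ j, A k j * (p • a + q • b) j
          = p * (∑ j, A k j * a j) + q * (∑ j, A k j * b j) := by
        rw [Finset.mul_sum, Finset.mul_sum, ← Finset.sum_add_distrib]
        exact Finset.sum_congr rfl fun j _ => by
          simp only [Pi.add_apply, Pi.smul_apply, smul_eq_mul]; ring
      rw [he, ha.2.2 k hk, hb.2.2 k hk]
      linarith
  have hAclosed : IsClosed (Alloc A KI) := by
    have he : Alloc A KI = (⋂ j, {a : J → ℝ | 0 ≤ a j}) ∩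
        ((⋂ k, {a : J → ℝ | ∑ j, A k j * a j ≤ 1}) ∩
          (⋂ k, ⋂ (_ : k ∈ KI), {a : J → ℝ | ∑ j, A k j * a j = 1})) := by
      ext a
      simp only [Alloc, Set.mem_setOf_eq, Set.mem_inter_iff, Set.mem_iInter]
      try tauto
    rw [he]
    have hsum : ∀ k : K, Continuous (fun a : J → ℝ => ∑ j, A k j * a j) :=
      fun k => continuous_finset_sum _ fun j _ => continuous_const.mul (continuous_apply j)
    refine IsClosed.inter (isClosed_iInter fun j =>
        isClosed_le continuous_const (continuous_apply j))
      (IsClosed.inter (isClosed_iInter fun k => isClosed_le (hsum k) continuous_const)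
        (isClosed_iInter fun k => isClosed_iInter fun _ =>
          isClosed_eq (hsum k) continuous_const))
  have hAsub : Alloc A KI ⊆ Set.Icc (0 : J → ℝ) 1 := by
    intro a ha
    constructor
    · intro j; exact ha.1 j
    · intro j
      obtain ⟨k, hk⟩ := hND.2.2 j
      have h1 : a j ≤ ∑ j', A k j' * a j' := by
        calc a j = A k j * a j := by rw [hk, one_mul]
          _ ≤ ∑ j', A k j' * a j' := Finset.single_le_sum
            (fun j' _ => mul_nonneg (A_nonneg hND k j') (ha.1 j')) (Finset.mem_univ j)
      exact h1.trans (ha.2.1 k)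
  have hAcompact : IsCompact (Alloc A KI) :=
    isCompact_Icc.of_isClosed_subset hAclosed hAsub
  have hxA : xstar ∈ Alloc A KI := by
    refine ⟨hxnn, fun k => ?_, hKIx⟩
    by_cases hk : k ∈ KI
    · rw [hKIx k hk]
    · exact hKSx k hk
  have hℒx : ℒ xstar = (0 : EuclideanSpace ℝ I) := PiLp.ext fun i => hRx i
  have h0V : (0 : EuclideanSpace ℝ I) ∈ V := ⟨xstar, hxA, hℒx⟩
  have h0D : (0 : EuclideanSpace ℝ I) ∈ D := ⟨h0V, by simp⟩
  have hVcompact : IsCompact V := hAcompact.image hcontℒ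
  have hVconvex : Convex ℝ V := hAconvex.linear_image ℒ
  have hinnercont : ∀ cc : EuclideanSpace ℝ I,
      Continuous fun wv : EuclideanSpace ℝ I => ⟪cc, wv⟫_ℝ :=
    fun cc => continuous_const.inner continuous_id
  have hDcompact : IsCompact D :=
    hVcompact.inter_right (isClosed_eq (hinnercont yE) continuous_const)
  have hDconvex : Convex ℝ D := by
    refine hVconvex.inter ?_
    intro a ha b hb p q hp hq hpq
    simp only [Set.mem_setOf_eq] at *
    rw [inner_add_right, real_inner_smul_right, real_inner_smul_right, ha, hb]
    ring
  have hDclosed : IsClosed D := hDcompact.isClosed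
  -- key positivity from step_c
  have key : ∀ cE : EuclideanSpace ℝ I, ⟪yE, cE⟫_ℝ = 0 → cE ≠ 0 →
      ∃ wv ∈ D, 0 < ⟪cE, wv⟫_ℝ := by
    intro cE hyc hc0
    by_contra hcon
    push_neg at hcon
    refine step_c R A JI KI hND xstar hxf' ystar zstar hD hznn (fun i => cE i) ?_ ?_ ?_
    · rw [einner] at hyc
      exact hyc
    · intro h
      exact hc0 (PiLp.ext fun i => congrFun h i)
    · intro a ha hya
      have hwvV : ℒ a ∈ V := ⟨a, ha, rfl⟩
      have hwvH : ⟪yE, ℒ a⟫_ℝ = 0 := by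
        rw [einner]
        exact hya
      have := hcon (ℒ a) ⟨hwvV, hwvH⟩
      rw [einner] at this
      exact this
  -- transfer of membership
  have hVgoal : ∀ v : I → ℝ, (WithLp.equiv 2 (I → ℝ)).symm v ∈ V →
      v ∈ (fun a => fun i => ∑ j, R i j * a j) '' Alloc A KI := by
    rintro v ⟨a, ha, haeq⟩
    exact ⟨a, ha, funext fun i => congrFun (congrArg WithLp.ofLp haeq) i⟩
  -- the unit sphere of the hyperplane
  set SH : Set (EuclideanSpace ℝ I) := {cc | ⟪yE, cc⟫_ℝ = 0 ∧ ‖cc‖ = 1} with hSHdef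
  by_cases hSH : SH.Nonempty
  · -- bound for D
    obtain ⟨M, hM⟩ := hDcompact.isBounded.subset_closedBall 0
    have hMnorm : ∀ wv ∈ D, ‖wv‖ ≤ M := fun wv hwv =>
      mem_closedBall_zero_iff.mp (hM hwv)
    have hM0 : 0 ≤ M := le_trans (norm_nonneg _) (hMnorm 0 h0D)
    set g : EuclideanSpace ℝ I → ℝ :=
      fun cc => sSup ((fun wv => ⟪cc, wv⟫_ℝ) '' D) with hgdef
    have himgc : ∀ cc : EuclideanSpace ℝ I,
        IsCompact ((fun wv => ⟪cc, wv⟫_ℝ) '' D) :=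
      fun cc => hDcompact.image (hinnercont cc)
    have himgne : ∀ cc : EuclideanSpace ℝ I,
        ((fun wv => ⟪cc, wv⟫_ℝ) '' D).Nonempty := fun cc => ⟨_, ⟨0, h0D, rfl⟩⟩
    have hgub : ∀ cc, ∀ wv ∈ D, ⟪cc, wv⟫_ℝ ≤ g cc := fun cc wv hwv =>
      le_csSup (himgc cc).bddAbove ⟨wv, hwv, rfl⟩
    have hgmem : ∀ cc : EuclideanSpace ℝ I, ∃ wv ∈ D, ⟪cc, wv⟫_ℝ = g cc := by
      intro cc
      have := (himgc cc).sSup_mem (himgne cc)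
      obtain ⟨wv, hwv, heq⟩ := this
      exact ⟨wv, hwv, heq⟩
    have hgstep : ∀ c1 c2 : EuclideanSpace ℝ I, g c1 ≤ g c2 + M * ‖c1 - c2‖ := by
      intro c1 c2
      obtain ⟨wv, hwvD, hwveq⟩ := hgmem c1
      have h1 : ⟪c1, wv⟫_ℝ = ⟪c2, wv⟫_ℝ + ⟪c1 - c2, wv⟫_ℝ := by
        rw [inner_sub_left]; ring
      have h2 : ⟪c1 - c2, wv⟫_ℝ ≤ ‖c1 - c2‖ * ‖wv‖ := real_inner_le_norm _ _
      have h3 : ‖c1 - c2‖ * ‖wv‖ ≤ M * ‖c1 - c2‖ := by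
        rw [mul_comm]
        exact mul_le_mul_of_nonneg_right (hMnorm wv hwvD) (norm_nonneg _)
      have h4 := hgub c2 wv hwvD
      rw [← hwveq, h1]
      linarith
    have hgcont : Continuous g := by
      refine (LipschitzWith.of_dist_le_mul (K := Real.toNNReal M) (f := g) ?_).continuous
      intro c1 c2
      rw [Real.dist_eq, dist_eq_norm, Real.coe_toNNReal M hM0]
      rw [abs_sub_le_iff]
      constructor
      · linarith [hgstep c1 c2]
      · have := hgstep c2 c1
        rw [norm_sub_rev] at this
        linarith
    have hSHclosed : IsClosed SH :=
      IsClosed.inter (isClosed_eq (hinnercont yE) continuous_const)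
        (isClosed_eq continuous_norm continuous_const)
    have hSHbdd : SH ⊆ Metric.closedBall 0 1 := by
      intro cc hcc
      rw [mem_closedBall_zero_iff, hcc.2]
    have hSHcompact : IsCompact SH :=
      (isCompact_closedBall (0 : EuclideanSpace ℝ I) 1).of_isClosed_subset hSHclosed hSHbdd
    obtain ⟨c₀, hc₀SH, hc₀min⟩ := hSHcompact.exists_isMinOn hSH hgcont.continuousOn
    have hc₀ne : c₀ ≠ 0 := by
      intro h
      have := hc₀SH.2
      rw [h] at this
      simp at this
    obtain ⟨wv₀, hwv₀D, hwv₀pos⟩ := key c₀ hc₀SH.1 hc₀ne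
    have hm : 0 < g c₀ := lt_of_lt_of_le hwv₀pos (hgub c₀ wv₀ hwv₀D)
    refine ⟨g c₀, hm, ?_⟩
    intro v hvy hvnorm
    set vE : EuclideanSpace ℝ I := (WithLp.equiv 2 (I → ℝ)).symm v with hvE
    have hvEy : ⟪yE, vE⟫_ℝ = 0 := by rw [einner]; exact hvy
    have hvEnorm : ‖vE‖ ≤ g c₀ := by
      rw [EuclideanSpace.norm_eq]
      calc Real.sqrt (∑ i, ‖vE i‖ ^ 2) = Real.sqrt (∑ i, v i ^ 2) := by
            congr 1
            exact Finset.sum_congr rfl fun i _ => by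
              rw [Real.norm_eq_abs, sq_abs]; rfl
        _ ≤ g c₀ := hvnorm
    by_contra hgoal
    have hvV : vE ∉ V := fun hv => hgoal (hVgoal v hv)
    have hvD : vE ∉ D := fun hd => hvV hd.1
    obtain ⟨f, u, hfD, hufv⟩ := geometric_hahn_banach_closed_point hDconvex hDclosed hvD
    set c₀' : EuclideanSpace ℝ I := (toDual ℝ (EuclideanSpace ℝ I)).symm f with hc₀'
    have hcf : ∀ x : EuclideanSpace ℝ I, ⟪c₀', x⟫_ℝ = f x := fun x => toDual_symm_apply
    have hu0 : 0 < u := by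
      have := hfD 0 h0D
      rwa [map_zero] at this
    set c₁ : EuclideanSpace ℝ I := c₀' - (⟪yE, c₀'⟫_ℝ / ⟪yE, yE⟫_ℝ) • yE with hc₁def
    have h1 : ∀ wv : EuclideanSpace ℝ I, ⟪yE, wv⟫_ℝ = 0 → ⟪c₁, wv⟫_ℝ = f wv := by
      intro wv hwv
      rw [hc₁def, inner_sub_left, real_inner_smul_left, hwv, mul_zero, sub_zero, hcf]
    have h2 : ⟪yE, c₁⟫_ℝ = 0 := by
      by_cases hy0 : yE = 0
      · rw [hc₁def, hy0]
        simp
      · have hyy : ⟪yE, yE⟫_ℝ ≠ 0 := fun hz => hy0 (inner_self_eq_zero.mp hz)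
        rw [hc₁def, inner_sub_right, real_inner_smul_right, div_mul_cancel₀ _ hyy, sub_self]
    have hc₁v : u < ⟪c₁, vE⟫_ℝ := by
      rw [h1 vE hvEy]
      exact hufv
    have hc₁0 : c₁ ≠ 0 := by
      intro h
      rw [h, inner_zero_left] at hc₁v
      linarith
    have hpos : 0 < ‖c₁‖ := norm_pos_iff.mpr hc₁0
    set c₂ : EuclideanSpace ℝ I := ‖c₁‖⁻¹ • c₁ with hc₂def
    have hc₂SH : c₂ ∈ SH := by
      constructor
      · rw [hc₂def, real_inner_smul_right, h2, mul_zero]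
      · rw [hc₂def]
        exact norm_smul_inv_norm hc₁0
    have hmle : g c₀ ≤ g c₂ := hc₀min hc₂SH
    obtain ⟨wv', hwv'D, hwv'eq⟩ := hgmem c₂
    have hchain : g c₂ < g c₀ := by
      have e1 : g c₂ = ‖c₁‖⁻¹ * f wv' := by
        rw [← hwv'eq, hc₂def, real_inner_smul_left, h1 wv' hwv'D.2]
      have e2 : f wv' < u := hfD wv' hwv'D
      have e3 : ‖c₁‖⁻¹ * f wv' < ‖c₁‖⁻¹ * u :=
        mul_lt_mul_of_pos_left e2 (inv_pos.mpr hpos)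
      have e4 : ‖c₁‖⁻¹ * u < ‖c₁‖⁻¹ * ⟪c₁, vE⟫_ℝ :=
        mul_lt_mul_of_pos_left hc₁v (inv_pos.mpr hpos)
      have e5 : ‖c₁‖⁻¹ * ⟪c₁, vE⟫_ℝ = ⟪c₂, vE⟫_ℝ := by
        rw [hc₂def, real_inner_smul_left]
      have e6 : ⟪c₂, vE⟫_ℝ ≤ ‖c₂‖ * ‖vE‖ := real_inner_le_norm _ _
      have e7 : ‖c₂‖ = 1 := hc₂SH.2
      have e8 : ‖vE‖ ≤ g c₀ := hvEnorm
      calc g c₂ = ‖c₁‖⁻¹ * f wv' := e1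
        _ < ‖c₁‖⁻¹ * u := e3
        _ < ‖c₁‖⁻¹ * ⟪c₁, vE⟫_ℝ := e4
        _ = ⟪c₂, vE⟫_ℝ := e5
        _ ≤ ‖c₂‖ * ‖vE‖ := e6
        _ = ‖vE‖ := by rw [e7, one_mul]
        _ ≤ g c₀ := e8
    linarith
  · -- the hyperplane is trivial
    refine ⟨1, one_pos, ?_⟩
    intro v hvy _
    set vE : EuclideanSpace ℝ I := (WithLp.equiv 2 (I → ℝ)).symm v with hvE
    have hvEy : ⟪yE, vE⟫_ℝ = 0 := by rw [einner]; exact hvy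
    have hvE0 : vE = 0 := by
      by_contra hne
      apply hSH
      refine ⟨‖vE‖⁻¹ • vE, ?_, norm_smul_inv_norm hne⟩
      rw [real_inner_smul_right, hvEy, mul_zero]
    refine ⟨xstar, hxA, funext fun i => ?_⟩
    show (∑ j, R i j * xstar j) = v i
    rw [hRx i]
    exact (congrFun (congrArg WithLp.ofLp hvE0) i).symm
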